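/- Let A be a 6×6 additive-multiplicative magic square of distinct positive integers whose magic product P has the form P = p^s·q^4 for distinct primes p and q and a positive integer s. Then p = 2. -/

import Mathlib

set_option maxHeartbeats 1000000


lemma exists_pow_mul_pow' {p q : ℕ} (hp : p.Prime) (hq : q.Prime) {x s t : ℕ}
    (h : x ∣ p ^ s * q ^ t) : ∃ a b, b ≤ t ∧ x = p ^ a * q ^ b := by
  obtain ⟨m, n, hm, hn, rfl⟩ := Nat.dvd_mul.mp h
  obtain ⟨a, _, rfl⟩ := (Nat.dvd_prime_pow hp).mp hm
  obtain ⟨b, hb, rfl⟩ := (Nat.dvd_prime_pow hq).mp hn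
  exact ⟨a, b, hb, rfl⟩

lemma q_exp_eq' {p q : ℕ} (hp : p.Prime) (hq : q.Prime) (hpq : p ≠ q) {A B C D : ℕ}
    (h : p ^ A * q ^ B = p ^ C * q ^ D) : B = D := by
  have h2 := congrArg (fun n => n.factorization q) h
  simpa [Nat.factorization_mul (pow_ne_zero _ hp.pos.ne') (pow_ne_zero _ hq.pos.ne'),
    hp.factorization_pow, hq.factorization_pow, Finsupp.single_apply, hpq] using h2

lemma four_distinct_sum_big (u : Finset ℕ) (hu : u ⊆ Finset.range 5) (hc : 4 ≤ u.card) :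
    6 ≤ ∑ x ∈ u, x := by
  have h1 : ∑ x ∈ Finset.range 5 \ u, x + ∑ x ∈ u, x = ∑ x ∈ Finset.range 5, x :=
    Finset.sum_sdiff hu
  have h2 : (Finset.range 5 \ u).card = 5 - u.card := by
    rw [Finset.card_sdiff_of_subset hu, Finset.card_range]
  have h3 : ∑ x ∈ Finset.range 5 \ u, x ≤ (Finset.range 5 \ u).card * 4 := by
    apply Finset.sum_le_card_nsmul
    intro x hx
    have := Finset.mem_sdiff.mp hx
    have := Finset.mem_range.mp (hu.trans (le_refl _) |> fun _ => this.1)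
    omega
  have h4 : ∑ x ∈ Finset.range 5, x = 10 := by decide
  have h5 : u.card ≤ 5 := by
    have := Finset.card_le_card hu
    simpa using this
  omega

lemma rect_combo (x y z w : ℕ)
    (b1 : x ≤ 4) (b2 : y ≤ 4) (b3 : z ≤ 4) (b4 : w ≤ 4)
    (d1 : x ≠ y) (d2 : x ≠ z) (d3 : x ≠ w) (d4 : y ≠ z) (d5 : y ≠ w) (d6 : z ≠ w)
    (s1 : x + y ≤ 4) (s2 : z + w ≤ 4) (s3 : x + z ≤ 4) (s4 : y + w ≤ 4) :
    ((x = 1 ∧ y = 2) ∨ (x = 2 ∧ y = 1) ∨ (z = 1 ∧ w = 2) ∨ (z = 2 ∧ w = 1) ∨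
     (x = 1 ∧ z = 2) ∨ (x = 2 ∧ z = 1) ∨ (y = 1 ∧ w = 2) ∨ (y = 2 ∧ w = 1)) ∧
    ((x = 0 ∧ y = 2) ∨ (x = 2 ∧ y = 0) ∨ (z = 0 ∧ w = 2) ∨ (z = 2 ∧ w = 0) ∨
     (x = 0 ∧ z = 2) ∨ (x = 2 ∧ z = 0) ∨ (y = 0 ∧ w = 2) ∨ (y = 2 ∧ w = 0)) := by
  have hx3 : x ≤ 3 := by omega
  have hy3 : y ≤ 3 := by omega
  have hz3 : z ≤ 3 := by omega
  have hw3 : w ≤ 3 := by omega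
  have h3 : x = 3 ∨ y = 3 ∨ z = 3 ∨ w = 3 := by omega
  rcases h3 with h | h | h | h <;> subst h
  · have hw : w = 2 := by omega
    subst hw
    have hy : y = 0 ∨ y = 1 := by omega
    rcases hy with h | h <;> subst h <;> constructor <;> omega
  · have hz : z = 2 := by omega
    subst hz
    have hx : x = 0 ∨ x = 1 := by omega
    rcases hx with h | h <;> subst h <;> constructor <;> omega
  · have hy : y = 2 := by omega
    subst hy
    have hx : x = 0 ∨ x = 1 := by omega
    rcases hx with h | h <;> subst h <;> constructor <;> omega
  · have hx : x = 2 := by omega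
    subst hx
    have hy : y = 0 ∨ y = 1 := by omega
    rcases hy with h | h <;> subst h <;> constructor <;> omega


/-- `A` is an `n × n` additive-multiplicative magic square of pairwise distinct
positive integers, with magic sum `S` and magic product `P`: every row, every
column, and both long diagonals have sum `S` and product `P`. -/
def IsAddMulMagicSquare (n : ℕ) (A : Fin n → Fin n → ℕ) (S P : ℕ) : Prop :=
  (∀ i j, 0 < A i j) ∧
  (Function.Injective fun c : Fin n × Fin n => A c.1 c.2) ∧
  (∀ i, ∑ j, A i j = S) ∧
  (∀ j, ∑ i, A i j = S) ∧
  (∑ i, A i i = S) ∧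
  (∑ i, A i i.rev = S) ∧
  (∀ i, ∏ j, A i j = P) ∧
  (∀ j, ∏ i, A i j = P) ∧
  (∏ i, A i i = P) ∧
  (∏ i, A i i.rev = P)

/-- If a 6×6 additive-multiplicative magic square of distinct positive integers
has magic product `P = p^s * q^4` with `p ≠ q` primes and `s ≥ 1`, then
`p = 2`. -/
theorem six_square_product_p_pow_q_four_forces_two
    (A : Fin 6 → Fin 6 → ℕ) (S P : ℕ)
    (hA : IsAddMulMagicSquare 6 A S P)
    (p q s : ℕ) (hp : p.Prime) (hq : q.Prime) (hpq : p ≠ q) (hs : 1 ≤ s)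
    (hP : P = p ^ s * q ^ 4) :
    p = 2 := by
  obtain ⟨hpos, hinj, hrowS, hcolS, _, _, hrowP, hcolP, _, _⟩ := hA
  clear hpos
  classical
  have hdvd : ∀ i j, A i j ∣ p ^ s * q ^ 4 := by
    intro i j
    rw [← hP, ← hrowP i]
    exact Finset.dvd_prod_of_mem _ (Finset.mem_univ j)
  have hex : ∀ i j, ∃ a b, b ≤ 4 ∧ A i j = p ^ a * q ^ b := fun i j =>
    exists_pow_mul_pow' hp hq (hdvd i j)
  choose a b hb4 hab using hex
  have hprod : ∀ (f : Fin 6 → ℕ) (g : Fin 6 → ℕ),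
      (∏ t, (p ^ f t * q ^ g t)) = p ^ (∑ t, f t) * q ^ (∑ t, g t) := by
    intro f g
    rw [Finset.prod_mul_distrib, Finset.prod_pow_eq_pow_sum, Finset.prod_pow_eq_pow_sum]
  have hrowb : ∀ i, ∑ j, b i j = 4 := by
    intro i
    have h := hrowP i
    rw [hP] at h
    have he : (∏ j, A i j) = p ^ (∑ j, a i j) * q ^ (∑ j, b i j) := by
      rw [← hprod]; exact Finset.prod_congr rfl fun j _ => hab i j
    rw [he] at h
    exact q_exp_eq' hp hq hpq h
  have hcolb : ∀ j, ∑ i, b i j = 4 := by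
    intro j
    have h := hcolP j
    rw [hP] at h
    have he : (∏ i, A i j) = p ^ (∑ i, a i j) * q ^ (∑ i, b i j) := by
      rw [← hprod]; exact Finset.prod_congr rfl fun i _ => hab i j
    rw [he] at h
    exact q_exp_eq' hp hq hpq h
  -- minimum p-exponent
  set Im : Finset ℕ := Finset.image (fun c : Fin 6 × Fin 6 => a c.1 c.2) Finset.univ with hIm
  have hImne : Im.Nonempty := ⟨a 0 0, Finset.mem_image.mpr ⟨(0,0), Finset.mem_univ _, rfl⟩⟩
  set k := Im.min' hImne with hk
  have hkle : ∀ i j, k ≤ a i j := fun i j =>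
    Finset.min'_le _ _ (Finset.mem_image.mpr ⟨(i,j), Finset.mem_univ _, rfl⟩)
  have hkmem : ∃ i j, a i j = k := by
    obtain ⟨c, _, hc⟩ := Finset.mem_image.mp (Im.min'_mem hImne)
    exact ⟨c.1, c.2, hc⟩
  -- pair injectivity
  have hbinj : ∀ i j i' j', a i j = k → a i' j' = k → b i j = b i' j' → (i,j) = (i',j') := by
    intro i j i' j' h1 h2 h3
    apply hinj
    show A i j = A i' j'
    rw [hab, hab, h1, h2, h3]
  -- quotient square
  set A' : Fin 6 → Fin 6 → ℕ := fun i j => p ^ (a i j - k) * q ^ b i j with hA'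
  have hpk : ∀ i j, p ^ k * A' i j = A i j := by
    intro i j
    rw [hA', hab, ← mul_assoc, ← pow_add, Nat.add_sub_cancel' (hkle i j)]
  set S₁ := ∑ j, A' 0 j with hS₁
  have key : ∀ (L : Fin 6 → Fin 6 × Fin 6),
      (∑ t, A (L t).1 (L t).2 = S) → ∑ t, A' (L t).1 (L t).2 = S₁ := by
    intro L hL
    have h1 : p ^ k * ∑ t, A' (L t).1 (L t).2 = p ^ k * S₁ := by
      rw [Finset.mul_sum, Finset.mul_sum]
      simp_rw [hpk]
      rw [hL, ← hrowS 0]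
    exact Nat.eq_of_mul_eq_mul_left (pow_pos hp.pos k) h1
  have hrowS' : ∀ i, ∑ j, A' i j = S₁ := fun i => key (fun t => (i, t)) (hrowS i)
  have hcolS' : ∀ j, ∑ i, A' i j = S₁ := fun j => key (fun t => (t, j)) (hcolS j)
  -- the T set
  set T : Finset (Fin 6 × Fin 6) :=
    Finset.univ.filter (fun c : Fin 6 × Fin 6 => a c.1 c.2 = k) with hT
  have hTmem : ∀ c : Fin 6 × Fin 6, c ∈ T ↔ a c.1 c.2 = k := by
    intro c; simp [hT]
  have hTcard : T.card ≤ 5 := by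
    have h1 : T.card ≤ (Finset.range 5).card := by
      apply Finset.card_le_card_of_injOn (fun c => b c.1 c.2)
      · intro c hc
        simp only [Finset.mem_range]
        exact Finset.mem_coe.mpr (Finset.mem_range.mpr (Nat.lt_succ_of_le (hb4 c.1 c.2)))
      · intro c hc c' hc' hbc
        exact hbinj _ _ _ _ ((hTmem c).mp hc) ((hTmem c').mp hc') hbc
    simpa using h1
  set rowT : Fin 6 → Finset (Fin 6) := fun i => Finset.univ.filter (fun j => a i j = k) with hrowT
  set colT : Fin 6 → Finset (Fin 6) := fun j => Finset.univ.filter (fun i => a i j = k) with hcolT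
  have hrowTmem : ∀ i j, j ∈ rowT i ↔ a i j = k := by intro i j; simp [hrowT]
  have hcolTmem : ∀ j i, i ∈ colT j ↔ a i j = k := by intro j i; simp [hcolT]
  have hfib : T.card = ∑ i, (rowT i).card := by
    rw [Finset.card_eq_sum_card_fiberwise (f := Prod.fst) (t := Finset.univ)
      (fun c _ => Finset.mem_univ c.1)]
    apply Finset.sum_congr rfl
    intro i _
    have him : T.filter (fun c => c.1 = i) = (rowT i).image (fun j => (i, j)) := by
      ext c
      simp only [Finset.mem_filter, Finset.mem_image, hTmem, hrowTmem]
      constructor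
      · rintro ⟨h1, rfl⟩; exact ⟨c.2, h1, rfl⟩
      · rintro ⟨j, hj, rfl⟩; exact ⟨hj, rfl⟩
    rw [him, Finset.card_image_of_injective _ (fun x y h => by simpa using h)]
  have hfibc : T.card = ∑ j, (colT j).card := by
    rw [Finset.card_eq_sum_card_fiberwise (f := Prod.snd) (t := Finset.univ)
      (fun c _ => Finset.mem_univ c.2)]
    apply Finset.sum_congr rfl
    intro j _
    have him : T.filter (fun c => c.2 = j) = (colT j).image (fun i => (i, j)) := by
      ext c
      simp only [Finset.mem_filter, Finset.mem_image, hTmem, hcolTmem]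
      constructor
      · rintro ⟨h1, rfl⟩; exact ⟨c.1, h1, rfl⟩
      · rintro ⟨i, hi, rfl⟩; exact ⟨hi, rfl⟩
    rw [him, Finset.card_image_of_injective _ (fun x y h => by simpa using h)]
  -- empty row exists, p ∣ S₁
  have hempty : ∃ i, rowT i = ∅ := by
    by_contra hcon
    push_neg at hcon
    have h6 : 6 ≤ ∑ i : Fin 6, (rowT i).card := by
      have h1 : ∀ i : Fin 6, 1 ≤ (rowT i).card := fun i =>
        Nat.one_le_iff_ne_zero.mpr (fun h => (hcon i).ne_empty (Finset.card_eq_zero.mp h))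
      calc (6:ℕ) = ∑ _i : Fin 6, 1 := by simp
      _ ≤ _ := Finset.sum_le_sum (fun i _ => h1 i)
    omega
  have hpS₁ : p ∣ S₁ := by
    obtain ⟨i₀, hi₀⟩ := hempty
    rw [← hrowS' i₀]
    apply Finset.dvd_sum
    intro j _
    rw [hA']
    have haj : a i₀ j ≠ k := by
      intro h
      have h2 : j ∈ rowT i₀ := (hrowTmem i₀ j).mpr h
      rw [hi₀] at h2; simp at h2
    have h1 : a i₀ j - k ≠ 0 := by have := hkle i₀ j; omega
    exact dvd_mul_of_dvd_left (dvd_pow_self p h1) _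
  -- line congruences
  have hrowCong : ∀ i, p ∣ ∑ j ∈ rowT i, q ^ b i j := by
    intro i
    have hsplit : S₁ = (∑ j ∈ rowT i, A' i j)
        + ∑ j ∈ Finset.univ.filter (fun j => ¬ a i j = k), A' i j := by
      rw [← hrowS' i, hrowT]
      exact (Finset.sum_filter_add_sum_filter_not _ _ _).symm
    have heq : ∑ j ∈ rowT i, A' i j = ∑ j ∈ rowT i, q ^ b i j := by
      apply Finset.sum_congr rfl
      intro j hj
      simp only [hA', (hrowTmem i j).mp hj, Nat.sub_self, pow_zero, one_mul]
    have hrest : p ∣ ∑ j ∈ Finset.univ.filter (fun j => ¬ a i j = k), A' i j := by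
      apply Finset.dvd_sum
      intro j hj
      simp only [Finset.mem_filter] at hj
      rw [hA']
      have h1 : a i j - k ≠ 0 := by have := hkle i j; have := hj.2; omega
      exact dvd_mul_of_dvd_left (dvd_pow_self p h1) _
    have hd : p ∣ (∑ j ∈ rowT i, A' i j) := by
      have h2 := Nat.dvd_sub (hsplit ▸ hpS₁) hrest
      simpa using h2
    rwa [heq] at hd
  have hcolCong : ∀ j, p ∣ ∑ i ∈ colT j, q ^ b i j := by
    intro j
    have hsplit : S₁ = (∑ i ∈ colT j, A' i j)
        + ∑ i ∈ Finset.univ.filter (fun i => ¬ a i j = k), A' i j := by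
      rw [← hcolS' j, hcolT]
      exact (Finset.sum_filter_add_sum_filter_not _ _ _).symm
    have heq : ∑ i ∈ colT j, A' i j = ∑ i ∈ colT j, q ^ b i j := by
      apply Finset.sum_congr rfl
      intro i hi
      simp only [hA', (hcolTmem j i).mp hi, Nat.sub_self, pow_zero, one_mul]
    have hrest : p ∣ ∑ i ∈ Finset.univ.filter (fun i => ¬ a i j = k), A' i j := by
      apply Finset.dvd_sum
      intro i hi
      simp only [Finset.mem_filter] at hi
      rw [hA']
      have h1 : a i j - k ≠ 0 := by have := hkle i j; have := hi.2; omega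
      exact dvd_mul_of_dvd_left (dvd_pow_self p h1) _
    have hd : p ∣ (∑ i ∈ colT j, A' i j) := by
      have h2 := Nat.dvd_sub (hsplit ▸ hpS₁) hrest
      simpa using h2
    rwa [heq] at hd
  have hpq' : ¬ p ∣ q := fun h => hpq ((Nat.prime_dvd_prime_iff_eq hp hq).mp h)
  -- no line has exactly one T-cell
  have hrow1 : ∀ i, (rowT i).card ≠ 1 := by
    intro i h1
    obtain ⟨j, hj⟩ := Finset.card_eq_one.mp h1
    have h2 := hrowCong i
    rw [hj, Finset.sum_singleton] at h2
    exact hpq' (hp.dvd_of_dvd_pow h2)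
  have hcol1 : ∀ j, (colT j).card ≠ 1 := by
    intro j h1
    obtain ⟨i, hi⟩ := Finset.card_eq_one.mp h1
    have h2 := hcolCong j
    rw [hi, Finset.sum_singleton] at h2
    exact hpq' (hp.dvd_of_dvd_pow h2)
  -- no line has ≥ 4 T-cells
  have hrow3 : ∀ i, (rowT i).card ≤ 3 := by
    intro i
    by_contra hcon
    push_neg at hcon
    have hinjOn : Set.InjOn (b i) (rowT i) := by
      intro x hx y hy hxy
      have h := hbinj i x i y ((hrowTmem i x).mp hx) ((hrowTmem i y).mp hy) hxy
      simpa using h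
    have hcard : ((rowT i).image (b i)).card = (rowT i).card :=
      Finset.card_image_of_injOn hinjOn
    have hsub : (rowT i).image (b i) ⊆ Finset.range 5 := by
      intro x hx
      obtain ⟨j, _, rfl⟩ := Finset.mem_image.mp hx
      exact Finset.mem_range.mpr (Nat.lt_succ_of_le (hb4 i j))
    have h6 := four_distinct_sum_big _ hsub (by omega)
    have hsum : ∑ x ∈ (rowT i).image (b i), x = ∑ j ∈ rowT i, b i j :=
      Finset.sum_image (fun x hx y hy h => hinjOn hx hy h)
    have hle : ∑ j ∈ rowT i, b i j ≤ ∑ j, b i j :=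
      Finset.sum_le_sum_of_subset (Finset.subset_univ _)
    rw [hrowb i] at hle
    omega
  have hcol3 : ∀ j, (colT j).card ≤ 3 := by
    intro j
    by_contra hcon
    push_neg at hcon
    have hinjOn : Set.InjOn (fun i => b i j) (colT j) := by
      intro x hx y hy hxy
      have h := hbinj x j y j ((hcolTmem j x).mp hx) ((hcolTmem j y).mp hy) hxy
      simpa using h
    have hcard : ((colT j).image (fun i => b i j)).card = (colT j).card :=
      Finset.card_image_of_injOn hinjOn
    have hsub : (colT j).image (fun i => b i j) ⊆ Finset.range 5 := by
      intro x hx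
      obtain ⟨i, _, rfl⟩ := Finset.mem_image.mp hx
      exact Finset.mem_range.mpr (Nat.lt_succ_of_le (hb4 i j))
    have h6 := four_distinct_sum_big _ hsub (by omega)
    have hsum : ∑ x ∈ (colT j).image (fun i => b i j), x = ∑ i ∈ colT j, b i j :=
      Finset.sum_image (fun x hx y hy h => hinjOn hx hy h)
    have hle : ∑ i ∈ colT j, b i j ≤ ∑ i, b i j :=
      Finset.sum_le_sum_of_subset (Finset.subset_univ _)
    rw [hcolb j] at hle
    omega
  set R : Finset (Fin 6) := Finset.univ.filter (fun i => (rowT i).Nonempty) with hR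
  set C : Finset (Fin 6) := Finset.univ.filter (fun j => (colT j).Nonempty) with hC
  have hRmem : ∀ i j, a i j = k → i ∈ R := by
    intro i j h
    simp only [hR, Finset.mem_filter, Finset.mem_univ, true_and]
    exact ⟨j, (hrowTmem i j).mpr h⟩
  have hCmem : ∀ i j, a i j = k → j ∈ C := by
    intro i j h
    simp only [hC, Finset.mem_filter, Finset.mem_univ, true_and]
    exact ⟨i, (hcolTmem j i).mpr h⟩
  have hR2each : ∀ i ∈ R, 2 ≤ (rowT i).card := by
    intro i hi
    simp only [hR, Finset.mem_filter, Finset.mem_univ, true_and] at hi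
    have h1 := Finset.card_pos.mpr hi
    have h2 := hrow1 i
    omega
  have hC2each : ∀ j ∈ C, 2 ≤ (colT j).card := by
    intro j hj
    simp only [hC, Finset.mem_filter, Finset.mem_univ, true_and] at hj
    have h1 := Finset.card_pos.mpr hj
    have h2 := hcol1 j
    omega
  have hRcard : R.card ≤ 2 := by
    have h1 : R.card • 2 ≤ ∑ i ∈ R, (rowT i).card :=
      Finset.card_nsmul_le_sum R _ 2 hR2each
    have h2 : ∑ i ∈ R, (rowT i).card ≤ ∑ i, (rowT i).card := by
      apply Finset.sum_le_sum_of_subset (Finset.subset_univ _)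
    rw [smul_eq_mul] at h1
    omega
  have hCcard : C.card ≤ 2 := by
    have h1 : C.card • 2 ≤ ∑ j ∈ C, (colT j).card :=
      Finset.card_nsmul_le_sum C _ 2 hC2each
    have h2 : ∑ j ∈ C, (colT j).card ≤ ∑ j, (colT j).card := by
      apply Finset.sum_le_sum_of_subset (Finset.subset_univ _)
    rw [smul_eq_mul] at h1
    omega
  -- R and C have exactly two elements
  obtain ⟨i₀, j₀, hij₀⟩ := hkmem
  have hRtwo : R.card = 2 := by
    have hj0C : j₀ ∈ C := hCmem i₀ j₀ hij₀
    have h2 := hC2each j₀ hj0C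
    obtain ⟨x, hx, y, hy, hxy⟩ := Finset.one_lt_card.mp (by omega : 1 < (colT j₀).card)
    have hxR : x ∈ R := hRmem x j₀ ((hcolTmem j₀ x).mp hx)
    have hyR : y ∈ R := hRmem y j₀ ((hcolTmem j₀ y).mp hy)
    have : 1 < R.card := Finset.one_lt_card.mpr ⟨x, hxR, y, hyR, hxy⟩
    omega
  have hCtwo : C.card = 2 := by
    have hi0R : i₀ ∈ R := hRmem i₀ j₀ hij₀
    have h2 := hR2each i₀ hi0R
    obtain ⟨x, hx, y, hy, hxy⟩ := Finset.one_lt_card.mp (by omega : 1 < (rowT i₀).card)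
    have hxC : x ∈ C := hCmem i₀ x ((hrowTmem i₀ x).mp hx)
    have hyC : y ∈ C := hCmem i₀ y ((hrowTmem i₀ y).mp hy)
    have : 1 < C.card := Finset.one_lt_card.mpr ⟨x, hxC, y, hyC, hxy⟩
    omega
  obtain ⟨iA, iB, hiAB, hRpair⟩ := Finset.card_eq_two.mp hRtwo
  obtain ⟨jA, jB, hjAB, hCpair⟩ := Finset.card_eq_two.mp hCtwo
  -- the rows/cols of the rectangle are exactly the pairs
  have hrowTiA : rowT iA = {jA, jB} := by
    apply Finset.eq_of_subset_of_card_le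
    · intro j hj
      have := hCmem iA j ((hrowTmem iA j).mp hj)
      rwa [hCpair] at this
    · rw [Finset.card_pair hjAB]
      exact hR2each iA (by rw [hRpair]; exact Finset.mem_insert_self _ _)
  have hrowTiB : rowT iB = {jA, jB} := by
    apply Finset.eq_of_subset_of_card_le
    · intro j hj
      have := hCmem iB j ((hrowTmem iB j).mp hj)
      rwa [hCpair] at this
    · rw [Finset.card_pair hjAB]
      exact hR2each iB (by rw [hRpair]; simp)
  have hcolTjA : colT jA = {iA, iB} := by
    apply Finset.eq_of_subset_of_card_le
    · intro i hi
      have := hRmem i jA ((hcolTmem jA i).mp hi)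
      rwa [hRpair] at this
    · rw [Finset.card_pair hiAB]
      exact hC2each jA (by rw [hCpair]; exact Finset.mem_insert_self _ _)
  have hcolTjB : colT jB = {iA, iB} := by
    apply Finset.eq_of_subset_of_card_le
    · intro i hi
      have := hRmem i jB ((hcolTmem jB i).mp hi)
      rwa [hRpair] at this
    · rw [Finset.card_pair hiAB]
      exact hC2each jB (by rw [hCpair]; simp)
  -- all four cells have minimal p-exponent
  have haAA : a iA jA = k := (hrowTmem iA jA).mp (by rw [hrowTiA]; simp)
  have haAB : a iA jB = k := (hrowTmem iA jB).mp (by rw [hrowTiA]; simp)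
  have haBA : a iB jA = k := (hrowTmem iB jA).mp (by rw [hrowTiB]; simp)
  have haBB : a iB jB = k := (hrowTmem iB jB).mp (by rw [hrowTiB]; simp)
  -- the four congruences
  have hc1 : p ∣ q ^ b iA jA + q ^ b iA jB := by
    have h := hrowCong iA
    rwa [hrowTiA, Finset.sum_pair hjAB] at h
  have hc2 : p ∣ q ^ b iB jA + q ^ b iB jB := by
    have h := hrowCong iB
    rwa [hrowTiB, Finset.sum_pair hjAB] at h
  have hc3 : p ∣ q ^ b iA jA + q ^ b iB jA := by
    have h := hcolCong jA
    rwa [hcolTjA, Finset.sum_pair hiAB] at h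
  have hc4 : p ∣ q ^ b iA jB + q ^ b iB jB := by
    have h := hcolCong jB
    rwa [hcolTjB, Finset.sum_pair hiAB] at h
  -- the four b-values are pairwise distinct, bounded, with pair sums ≤ 4
  have hbne : ∀ i j i' j', a i j = k → a i' j' = k → (i, j) ≠ (i', j') → b i j ≠ b i' j' := by
    intro i j i' j' h1 h2 h3 h4
    exact h3 (hbinj i j i' j' h1 h2 h4)
  have hd1 : b iA jA ≠ b iA jB := hbne _ _ _ _ haAA haAB (by simp [hjAB])
  have hd2 : b iA jA ≠ b iB jA := hbne _ _ _ _ haAA haBA (by simp [hiAB])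
  have hd3 : b iA jA ≠ b iB jB := hbne _ _ _ _ haAA haBB (by simp [hiAB])
  have hd4 : b iA jB ≠ b iB jA := hbne _ _ _ _ haAB haBA (by simp [hiAB])
  have hd5 : b iA jB ≠ b iB jB := hbne _ _ _ _ haAB haBB (by simp [hiAB])
  have hd6 : b iB jA ≠ b iB jB := hbne _ _ _ _ haBA haBB (by simp [hjAB])
  have hsum1 : b iA jA + b iA jB ≤ 4 := by
    have h := Finset.sum_le_sum_of_subset (Finset.subset_univ ({jA, jB} : Finset (Fin 6)))
      (f := b iA)
    rw [Finset.sum_pair hjAB, hrowb iA] at h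
    exact h
  have hsum2 : b iB jA + b iB jB ≤ 4 := by
    have h := Finset.sum_le_sum_of_subset (Finset.subset_univ ({jA, jB} : Finset (Fin 6)))
      (f := b iB)
    rw [Finset.sum_pair hjAB, hrowb iB] at h
    exact h
  have hsum3 : b iA jA + b iB jA ≤ 4 := by
    have h := Finset.sum_le_sum_of_subset (Finset.subset_univ ({iA, iB} : Finset (Fin 6)))
      (f := fun i => b i jA)
    rw [Finset.sum_pair hiAB, hcolb jA] at h
    exact h
  have hsum4 : b iA jB + b iB jB ≤ 4 := by
    have h := Finset.sum_le_sum_of_subset (Finset.subset_univ ({iA, iB} : Finset (Fin 6)))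
      (f := fun i => b i jB)
    rw [Finset.sum_pair hiAB, hcolb jB] at h
    exact h
  -- combinatorics: among the four line-pairs we find exponent pairs {1,2} and {0,2}
  have hG := rect_combo (b iA jA) (b iA jB) (b iB jA) (b iB jB)
    (hb4 _ _) (hb4 _ _) (hb4 _ _) (hb4 _ _) hd1 hd2 hd3 hd4 hd5 hd6 hsum1 hsum2 hsum3 hsum4
  have h12 : p ∣ q ^ 1 + q ^ 2 := by
    rcases hG.1 with ⟨h1, h2⟩ | ⟨h1, h2⟩ | ⟨h1, h2⟩ | ⟨h1, h2⟩ |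
      ⟨h1, h2⟩ | ⟨h1, h2⟩ | ⟨h1, h2⟩ | ⟨h1, h2⟩
    · rw [h1, h2] at hc1; exact hc1
    · rw [h1, h2] at hc1; rwa [Nat.add_comm] at hc1
    · rw [h1, h2] at hc2; exact hc2
    · rw [h1, h2] at hc2; rwa [Nat.add_comm] at hc2
    · rw [h1, h2] at hc3; exact hc3
    · rw [h1, h2] at hc3; rwa [Nat.add_comm] at hc3
    · rw [h1, h2] at hc4; exact hc4
    · rw [h1, h2] at hc4; rwa [Nat.add_comm] at hc4
  have h02 : p ∣ q ^ 0 + q ^ 2 := by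
    rcases hG.2 with ⟨h1, h2⟩ | ⟨h1, h2⟩ | ⟨h1, h2⟩ | ⟨h1, h2⟩ |
      ⟨h1, h2⟩ | ⟨h1, h2⟩ | ⟨h1, h2⟩ | ⟨h1, h2⟩
    · rw [h1, h2] at hc1; exact hc1
    · rw [h1, h2] at hc1; rwa [Nat.add_comm] at hc1
    · rw [h1, h2] at hc2; exact hc2
    · rw [h1, h2] at hc2; rwa [Nat.add_comm] at hc2
    · rw [h1, h2] at hc3; exact hc3
    · rw [h1, h2] at hc3; rwa [Nat.add_comm] at hc3
    · rw [h1, h2] at hc4; exact hc4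
    · rw [h1, h2] at hc4; rwa [Nat.add_comm] at hc4
  -- conclude p ∣ 2
  have hq1 : p ∣ q + 1 := by
    have he : q ^ 1 + q ^ 2 = q * (q + 1) := by ring
    rw [he] at h12
    rcases (Nat.Prime.dvd_mul hp).mp h12 with h | h
    · exact absurd h hpq'
    · exact h
  have h02' : p ∣ 1 + q ^ 2 := by
    rwa [pow_zero] at h02
  obtain ⟨m, rfl⟩ : ∃ m, q = m + 2 := ⟨q - 2, by have := hq.two_le; omega⟩
  have hq1' : p ∣ m + 3 := by
    have he : m + 2 + 1 = m + 3 := by omega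
    rwa [he] at hq1
  have hx : p ∣ (m + 3) * (m + 1) := hq1'.mul_right _
  have he2 : (m + 3) * (m + 1) + 2 = 1 + (m + 2) ^ 2 := by ring
  have h2 : p ∣ 2 := (Nat.dvd_add_right hx).mp (he2 ▸ h02')
  exact (Nat.prime_dvd_prime_iff_eq hp Nat.prime_two).mp h2
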